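/- Let F be a field with q elements and k ≥ 3, and let G be the k-uniform hypergraph on the normalized vectors of F^k with edges the linearly independent k-sets. Define C:F^k→F^n (n=(q^k−1)/(q−1)) by C_x(m) = ⟨x,m⟩ for each normalized vector x. Then for every edge e of G, the map m ↦ (C_x(m))_{x∈e} is injective, so q_lin(G) ≤ q while χ(G) = (q^k−1)/(q−1). -/

import Mathlib

/-- A vector in F^k is normalized if its leading nonzero entry equals 1. -/
def Normalized {k : ℕ} {F : Type} [Field F] (x : Fin k → F) : Prop :=
  ∃ i : Fin k, x i = 1 ∧ ∀ j : Fin k, j < i → x j = 0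

section helpers
variable {k : ℕ} {F : Type} [Field F]

lemma Normalized.ne_zero' {x : Fin k → F} (h : Normalized x) : x ≠ 0 := by
  obtain ⟨i, h1, -⟩ := h
  intro h0
  rw [h0] at h1
  simp at h1

lemma normalized_smul_eq_one {x : Fin k → F} {d : F} (hx : Normalized x)
    (hdx : Normalized (d • x)) (hd : d ≠ 0) : d = 1 := by
  obtain ⟨i, hi1, hi0⟩ := hx
  obtain ⟨i', hi'1, hi'0⟩ := hdx
  have hii : i = i' := by
    rcases lt_trichotomy i i' with h | h | h
    · have := hi'0 i h
      simp [hi1, hd] at this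
    · exact h
    · have := hi0 i' h
      simp [this] at hi'1
  subst hii
  simpa [hi1] using hi'1

lemma exists_normalized_smul {x : Fin k → F} (hx : x ≠ 0) :
    ∃ c : F, c ≠ 0 ∧ Normalized (c • x) := by
  classical
  have hne : (Finset.univ.filter (fun i => x i ≠ 0)).Nonempty := by
    obtain ⟨i, hi⟩ := Function.ne_iff.1 hx
    exact ⟨i, by simpa using hi⟩
  set i₀ := (Finset.univ.filter (fun i => x i ≠ 0)).min' hne with hi₀
  have hx0 : x i₀ ≠ 0 := by
    have := Finset.min'_mem _ hne
    simpa [hi₀] using this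
  refine ⟨(x i₀)⁻¹, inv_ne_zero hx0, i₀, by simp [inv_mul_cancel₀ hx0], ?_⟩
  intro j hj
  have : x j = 0 := by
    by_contra hj0
    have hmem : j ∈ Finset.univ.filter (fun i => x i ≠ 0) := by simpa using hj0
    exact absurd (Finset.min'_le _ _ hmem) (not_le.2 hj)
  simp [this]

lemma pair_indep {x y : Fin k → F} (hx : Normalized x) (hy : Normalized y) (hxy : x ≠ y) :
    LinearIndependent F (fun v : ({x, y} : Set (Fin k → F)) => (v : Fin k → F)) := by
  have hxny : x ∉ ({y} : Set (Fin k → F)) := by simpa using hxy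
  refine (linearIndepOn_id_insert hxny).2 ⟨(linearIndepOn_singleton_iff F).2 hy.ne_zero', ?_⟩
  rw [Submodule.mem_span_singleton]
  rintro ⟨a, ha⟩
  have ha0 : a ≠ 0 := by
    rintro rfl
    exact hx.ne_zero' (by simpa using ha.symm)
  have := normalized_smul_eq_one hy (ha ▸ hx) ha0
  subst this
  simp at ha
  exact hxy ha.symm

lemma exists_edge [Fintype F] (x y : {v : Fin k → F // Normalized v}) (hxy : x ≠ y) :
    ∃ s : Finset {v : Fin k → F // Normalized v}, s.card = k ∧
      LinearIndependent F (fun v : s => (v.val.val : Fin k → F)) ∧ x ∈ s ∧ y ∈ s := by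
  classical
  have hpair : LinearIndepOn F id ({x.val, y.val} : Set (Fin k → F)) :=
    pair_indep x.2 y.2 (fun h => hxy (Subtype.ext h))
  have hsub : ({x.val, y.val} : Set (Fin k → F)) ⊆ Set.univ := Set.subset_univ _
  set T := hpair.extend hsub with hT
  have hTind : LinearIndependent F (Subtype.val : T → (Fin k → F)) :=
    hpair.linearIndepOn_extend hsub
  have hTspan : Submodule.span F T = ⊤ := by
    rw [hT, hpair.span_extend_eq_span, Submodule.span_univ]
  have hxT : x.val ∈ T := hpair.subset_extend hsub (by simp)
  have hyT : y.val ∈ T := hpair.subset_extend hsub (by simp)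
  haveI : Fintype T := Fintype.ofFinite T
  have hcardT : Fintype.card T = k := by
    have B : Module.Basis T F (Fin k → F) :=
      Module.Basis.mk hTind (by rw [← hTspan]; exact le_of_eq (by rw [Subtype.range_coe]))
    have := Module.finrank_eq_card_basis B
    rw [Module.finrank_fintype_fun_eq_card] at this
    simpa using this.symm
  have hvne : ∀ v : T, (v : Fin k → F) ≠ 0 := fun v => hTind.ne_zero v
  choose c hc0 hcn using fun v : T => exists_normalized_smul (hvne v)
  let u : T → Fˣ := fun v => Units.mk0 (c v) (hc0 v)
  have hind' : LinearIndependent F (fun v : T => c v • (v : Fin k → F)) := by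
    have := hTind.units_smul u
    exact this
  let f : T → {v : Fin k → F // Normalized v} := fun v => ⟨c v • (v : Fin k → F), hcn v⟩
  have hfinj : Function.Injective f := by
    intro a b hab
    exact hind'.injective (by simpa [f] using congrArg Subtype.val hab)
  refine ⟨Finset.univ.image f, ?_, ?_, ?_, ?_⟩
  · rw [Finset.card_image_of_injective _ hfinj, Finset.card_univ, hcardT]
  · have hrange : LinearIndependent F
        (fun v : Set.range (fun t : T => (f t).val) => (v : Fin k → F)) := by
      have : Set.range (fun t : T => (f t).val)
          = Set.range (fun v : T => c v • (v : Fin k → F)) := rfl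
      rw [this]
      exact (linearIndepOn_id_range_iff hind'.injective).2 hind'
    have hmap : ∀ z : (Finset.univ.image f : Finset _),
        z.val.val ∈ Set.range (fun t : T => (f t).val) := by
      rintro ⟨z, hz⟩
      simp only [Finset.mem_image] at hz
      obtain ⟨t, -, rfl⟩ := hz
      exact ⟨t, rfl⟩
    exact hrange.comp
      (fun z : (Finset.univ.image f : Finset _) =>
        (⟨z.val.val, hmap z⟩ : Set.range (fun t : T => (f t).val)))
      (fun a b hab => Subtype.ext (Subtype.ext (by simpa using congrArg Subtype.val hab)))
  · refine Finset.mem_image.2 ⟨⟨x.val, hxT⟩, Finset.mem_univ _, ?_⟩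
    have h1 : c ⟨x.val, hxT⟩ = 1 := normalized_smul_eq_one x.2 (hcn ⟨x.val, hxT⟩) (hc0 _)
    simp [f, h1]
  · refine Finset.mem_image.2 ⟨⟨y.val, hyT⟩, Finset.mem_univ _, ?_⟩
    have h1 : c ⟨y.val, hyT⟩ = 1 := normalized_smul_eq_one y.2 (hcn ⟨y.val, hyT⟩) (hc0 _)
    simp [f, h1]

lemma card_normalized (k : ℕ) (F : Type) [Field F] [Fintype F] :
    Nat.card {v : Fin k → F // Normalized v} * (Fintype.card F - 1) =
      Fintype.card F ^ k - 1 := by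
  classical
  have hcard2 : Nat.card {v : Fin k → F // v ≠ 0} = Fintype.card F ^ k - 1 := by
    rw [Nat.card_eq_fintype_card, Fintype.card_subtype_compl]
    simp [Fintype.card_subtype_eq (0 : Fin k → F), Fintype.card_fun]
  have hcu : Fintype.card F - 1 = Nat.card Fˣ := by
    rw [Nat.card_eq_fintype_card, Fintype.card_units]
  rw [hcu, ← hcard2, ← Nat.card_prod]
  refine Nat.card_congr (Equiv.ofBijective
    (fun p : {v : Fin k → F // Normalized v} × Fˣ =>
      (⟨(p.2 : F) • p.1.val, smul_ne_zero p.2.ne_zero p.1.2.ne_zero'⟩ : {v : Fin k → F // v ≠ 0}))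
    ⟨?_, ?_⟩)
  · rintro ⟨x, c⟩ ⟨x', c'⟩ h
    have h' : (c : F) • x.val = (c' : F) • x'.val := congrArg Subtype.val h
    have hx' : x'.val = ((c' : F)⁻¹ * c) • x.val := by
      rw [mul_smul, h', ← mul_smul, inv_mul_cancel₀ c'.ne_zero, one_smul]
    have h1 : ((c' : F)⁻¹ * c) = 1 :=
      normalized_smul_eq_one x.2 (hx' ▸ x'.2)
        (mul_ne_zero (inv_ne_zero c'.ne_zero) c.ne_zero)
    have hxx : x' = x := Subtype.ext (by rw [hx', h1, one_smul])
    rw [hxx] at h' ⊢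
    have hcc : ((c : F) - (c' : F)) • (x : Fin k → F) = 0 := by
      rw [sub_smul, h', sub_self]
    rcases smul_eq_zero.1 hcc with h0 | h0
    · exact Prod.ext rfl (Units.ext (sub_eq_zero.1 h0))
    · exact absurd h0 x.2.ne_zero'
  · rintro ⟨v, hv⟩
    obtain ⟨c, hc0, hcn⟩ := exists_normalized_smul hv
    refine ⟨(⟨c • v, hcn⟩, Units.mk0 c⁻¹ (inv_ne_zero hc0)), ?_⟩
    apply Subtype.ext
    simp [smul_smul, inv_mul_cancel₀ hc0]

end helpers

/-- For a field F with q elements and k ≥ 3, consider the k-uniform hypergraph G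
on the normalized vectors of F^k with edges the linearly independent k-sets, and the linear
encoding C with C_x(m) = ⟨x,m⟩.  Then for every edge e, the map m ↦ (C_x(m))_{x∈e} is
injective (so there is a linear erasure code for G over F, i.e. q_lin(G) ≤ q), while
χ(G) = (q^k-1)/(q-1). -/
theorem stmt6 (F : Type) [Field F] [Fintype F] (q k : ℕ)
    (hF : Fintype.card F = q) (hk : 3 ≤ k) :
    (∀ s : Finset {x : Fin k → F // Normalized x}, s.card = k →
      LinearIndependent F (fun x : s => (x.val.val : Fin k → F)) →
        Function.Injective
          (fun (m : Fin k → F) => fun x : s => ∑ ℓ : Fin k, x.val.val ℓ * m ℓ)) ∧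
    sInf {c : ℕ | ∃ g : {x : Fin k → F // Normalized x} → Fin c,
        ∀ s : Finset {x : Fin k → F // Normalized x}, s.card = k →
          LinearIndependent F (fun x : s => (x.val.val : Fin k → F)) →
            Set.InjOn g ↑s} = (q ^ k - 1) / (q - 1) := by
  classical
  constructor
  · -- Part 1: injectivity of restricted encoding
    intro s hcard hli m₁ m₂ h
    haveI : Nonempty s := Finset.nonempty_coe_sort.mpr (Finset.card_pos.mp (by omega))
    have hspan : Submodule.span F (Set.range (fun x : s => (x.val.val : Fin k → F))) = ⊤ := by
      refine hli.span_eq_top_of_card_eq_finrank ?_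
      rw [Fintype.card_coe, hcard, Module.finrank_fintype_fun_eq_card, Fintype.card_fin]
    set d : Fin k → F := m₁ - m₂ with hd
    let φ : (Fin k → F) →ₗ[F] F :=
      { toFun := fun v => ∑ ℓ : Fin k, v ℓ * d ℓ
        map_add' := fun a b => by
          simp [add_mul, Finset.sum_add_distrib]
        map_smul' := fun a b => by
          simp [Finset.mul_sum, mul_assoc] }
    have hφ0 : φ = (0 : (Fin k → F) →ₗ[F] F) := by
      apply LinearMap.ext_on hspan
      rintro v ⟨x, rfl⟩
      have hx : (∑ ℓ : Fin k, x.val.val ℓ * m₁ ℓ) = ∑ ℓ : Fin k, x.val.val ℓ * m₂ ℓ :=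
        congrFun h x
      simp only [φ, LinearMap.coe_mk, AddHom.coe_mk, LinearMap.zero_apply, hd]
      have : ∑ ℓ : Fin k, x.val.val ℓ * (m₁ - m₂) ℓ
          = (∑ ℓ : Fin k, x.val.val ℓ * m₁ ℓ) - ∑ ℓ : Fin k, x.val.val ℓ * m₂ ℓ := by
        rw [← Finset.sum_sub_distrib]
        exact Finset.sum_congr rfl (fun ℓ _ => by simp [mul_sub])
      rw [this, hx, sub_self]
    funext i
    have := congrFun (congrArg (fun ψ : (Fin k → F) →ₗ[F] F => ψ.toFun) hφ0) (Pi.single i 1)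
    simp only [φ, LinearMap.coe_mk, AddHom.coe_mk] at this
    have hdi : d i = 0 := by
      simpa [Pi.single_apply, Finset.sum_ite_eq'] using this
    have := sub_eq_zero.1 (by simpa [hd] using congrFun (show m₁ - m₂ = d from rfl) i ▸ hdi)
    simpa [hd, sub_eq_zero] using hdi
  · -- Part 2: chromatic number
    haveI : Fintype {x : Fin k → F // Normalized x} := Fintype.ofFinite _
    set N := Nat.card {x : Fin k → F // Normalized x} with hN
    have hq2 : 2 ≤ q := by
      rw [← hF]
      exact Fintype.one_lt_card
    have hmul : N * (q - 1) = q ^ k - 1 := by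
      rw [hN, ← hF]
      exact card_normalized k F
    have hdiv : (q ^ k - 1) / (q - 1) = N := by
      rw [← hmul, Nat.mul_div_cancel _ (by omega)]
    rw [hdiv]
    have hNmem : N ∈ {c : ℕ | ∃ g : {x : Fin k → F // Normalized x} → Fin c,
        ∀ s : Finset {x : Fin k → F // Normalized x}, s.card = k →
          LinearIndependent F (fun x : s => (x.val.val : Fin k → F)) →
            Set.InjOn g ↑s} := by
      refine ⟨fun v => (Fintype.equivFin _ v).cast (by rw [hN, Nat.card_eq_fintype_card]), ?_⟩
      intro s _ _ a _ b _ hab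
      have : Fintype.equivFin _ a = Fintype.equivFin _ b := by
        apply Fin.val_injective
        simpa using congrArg Fin.val hab
      exact (Fintype.equivFin _).injective this
    refine le_antisymm (Nat.sInf_le hNmem) (le_csInf ⟨N, hNmem⟩ ?_)
    rintro c ⟨g, hg⟩
    by_contra hlt
    push_neg at hlt
    obtain ⟨x, y, hxy, hgxy⟩ := Fintype.exists_ne_map_eq_of_card_lt g
      (by rw [Fintype.card_fin]; rw [hN, Nat.card_eq_fintype_card] at hlt; exact hlt)
    obtain ⟨s, hcard, hli, hxs, hys⟩ := exists_edge x y hxy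
    exact hxy (hg s hcard hli (by simpa using hxs) (by simpa using hys) hgxy)
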